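/- Let κ > 0 and T > 0 be real numbers, and define η₀ : (0,T) → ℝ by η₀(t) = κ/(1 - e^{-2κ(T-t)}) + √(κ/(2t)). Then η₀ is differentiable on (0,T) and satisfies the ordinary differential inequality η₀'(t) ≤ 2 η₀(t)² - 2κ η₀(t) - κ/t for all t ∈ (0,T). -/

import Mathlib

/-- The explicit function `η₀(t) = κ/(1 - e^{-2κ(T-t)}) + √(κ/(2t))` of Corollary 1.9
is differentiable on `(0,T)` and satisfies `η₀' ≤ 2η₀² - 2κη₀ - κ/t` there. -/
theorem eta_zero_ODE_inequality (κ T : ℝ) (hκ : 0 < κ) (hT : 0 < T) :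
    ∀ t ∈ Set.Ioo (0 : ℝ) T,
      ∃ d : ℝ,
        HasDerivAt
          (fun s : ℝ => κ / (1 - Real.exp (-2 * κ * (T - s))) + Real.sqrt (κ / (2 * s))) d t ∧
        d ≤ 2 * (κ / (1 - Real.exp (-2 * κ * (T - t))) + Real.sqrt (κ / (2 * t)))^2
            - 2 * κ * (κ / (1 - Real.exp (-2 * κ * (T - t))) + Real.sqrt (κ / (2 * t)))
            - κ / t := by
  intro t ht
  obtain ⟨ht0, htT⟩ := ht
  set E : ℝ := Real.exp (-2 * κ * (T - t)) with hEdef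
  have hEpos : 0 < E := Real.exp_pos _
  have hE1 : E < 1 := by
    rw [hEdef]
    apply Real.exp_lt_one_iff.mpr
    nlinarith
  have hu : 0 < 1 - E := by linarith
  -- derivative of the first term
  have hinner : HasDerivAt (fun s : ℝ => -2 * κ * (T - s)) (2 * κ) t := by
    have h := ((hasDerivAt_id t).const_sub T).const_mul (-2 * κ)
    convert h using 1
    exacts [rfl, rfl, rfl, by ring]
  have hexp : HasDerivAt (fun s : ℝ => Real.exp (-2 * κ * (T - s))) (E * (2 * κ)) t :=
    hinner.exp
  have huder : HasDerivAt (fun s : ℝ => 1 - Real.exp (-2 * κ * (T - s))) (-(E * (2 * κ))) t :=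
    hexp.const_sub 1
  have hf1 : HasDerivAt (fun s : ℝ => κ / (1 - Real.exp (-2 * κ * (T - s))))
      ((0 * (1 - E) - κ * (-(E * (2 * κ)))) / (1 - E) ^ 2) t :=
    (hasDerivAt_const t κ).div huder hu.ne'
  -- derivative of the second term
  have h2t : (0:ℝ) < 2 * t := by linarith
  have hx : (0:ℝ) < κ / (2 * t) := by positivity
  have hinner2 : HasDerivAt (fun s : ℝ => κ / (2 * s)) ((0 * (2 * t) - κ * 2) / (2 * t) ^ 2) t :=
    (hasDerivAt_const t κ).div (by simpa using (hasDerivAt_id t).const_mul (2:ℝ)) h2t.ne'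
  have hf2 : HasDerivAt (fun s : ℝ => Real.sqrt (κ / (2 * s)))
      (1 / (2 * Real.sqrt (κ / (2 * t))) * ((0 * (2 * t) - κ * 2) / (2 * t) ^ 2)) t :=
    (Real.hasDerivAt_sqrt hx.ne').comp t hinner2
  refine ⟨_, hf1.add hf2, ?_⟩
  -- the inequality
  set g : ℝ := Real.sqrt (κ / (2 * t)) with hgdef
  have hg0 : 0 < g := Real.sqrt_pos.mpr hx
  have hg2 : g ^ 2 = κ / (2 * t) := Real.sq_sqrt hx.le
  set η : ℝ := κ / (1 - E) with hηdef
  have hd1 : (0 * (1 - E) - κ * (-(E * (2 * κ)))) / (1 - E) ^ 2 = 2 * η ^ 2 - 2 * κ * η := by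
    rw [hηdef]
    field_simp
    ring
  have hd2 : 1 / (2 * g) * ((0 * (2 * t) - κ * 2) / (2 * t) ^ 2) ≤ 0 := by
    apply mul_nonpos_of_nonneg_of_nonpos
    · positivity
    · apply div_nonpos_of_nonpos_of_nonneg
      · nlinarith
      · positivity
  have hηκ : κ ≤ η := by
    rw [hηdef, le_div_iff₀ hu]
    nlinarith
  have hκt : κ / t = 2 * (κ / (2 * t)) := by
    field_simp
  rw [hd1]
  nlinarith [mul_nonneg hg0.le (sub_nonneg.mpr hηκ), hg2, mul_pos hκ hg0]
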